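/- Let d ≥ 2 and k ≥ 2 be integers and let c ∈ ℝ. For R > 0 define v_k(R) := R(d−1) + (k−1)·log(R(d−1)) − log( (k−1)!·2^{d−1}(d−1)/ω_d ) and for u ∈ ℝ define ρ_R(u) := e^{−u} · ( ω_d ∫_0^R sinh(s)^{d−1} ds ) · (2^{d−1}(d−1) e^{−R(d−1)}/ω_d) · ( (u + v_k(R)) / (R(d−1)) )^{k−1}. Then there exist constants C > 0 and R₀ > 0, depending only on d, k and c, such that for all R ≥ R₀ one has ∫_c^∞ | ρ_R(u) − e^{−u} | du ≤ C · (log R)/R. -/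

import Mathlib

set_option maxHeartbeats 1000000

open Real MeasureTheory intervalIntegral

lemma int_exp_mul (b R : ℝ) (hb : b ≠ 0) :
    ∫ s in (0:ℝ)..R, Real.exp (b*s) = (Real.exp (b*R) - 1)/b := by
  rw [intervalIntegral.integral_comp_mul_left Real.exp hb, integral_exp]
  simp only [smul_eq_mul, mul_zero, Real.exp_zero]
  field_simp

lemma sinh_pow_ub (m : ℕ) {s : ℝ} (hs : 0 ≤ s) :
    Real.sinh s ^ m ≤ Real.exp ((m:ℝ)*s)/2^m := by
  have h1 : Real.sinh s ≤ Real.exp s / 2 := by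
    rw [Real.sinh_eq]; nlinarith [Real.exp_pos (-s)]
  calc Real.sinh s ^ m ≤ (Real.exp s/2)^m := pow_le_pow_left₀ ((Real.sinh_nonneg_iff.2 hs)) h1 m
    _ = Real.exp ((m:ℝ)*s)/2^m := by rw [div_pow, ← Real.exp_nat_mul]

lemma sinh_pow_lb (m : ℕ) (hm : 1 ≤ m) {s R : ℝ} (hs : 0 ≤ s) (hsR : s ≤ R) :
    Real.exp ((m:ℝ)*s)/2^m - (m:ℝ)*Real.exp (((m:ℝ)-1)*R)/2^m ≤ Real.sinh s ^ m := by
  have hm1 : (1:ℝ) ≤ (m:ℝ) := by exact_mod_cast hm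
  have hmul : Real.exp s * Real.exp (-2*s) = Real.exp (-s) := by
    rw [← Real.exp_add]; congr 1; ring
  have hsinh : Real.sinh s = (Real.exp s/2) * (1 - Real.exp (-2*s)) := by
    rw [Real.sinh_eq]; linear_combination (1/2) * hmul
  have hexple : Real.exp (-2*s) ≤ 1 := by
    rw [Real.exp_le_one_iff]; linarith
  have hbern : 1 - (m:ℝ)*Real.exp (-2*s) ≤ (1 - Real.exp (-2*s))^m := by
    have h := one_add_mul_le_pow (a := -Real.exp (-2*s)) (by nlinarith) m
    calc 1 - (m:ℝ)*Real.exp (-2*s) = 1 + (m:ℝ)*(-Real.exp (-2*s)) := by ring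
      _ ≤ (1 + -Real.exp (-2*s))^m := h
      _ = (1 - Real.exp (-2*s))^m := by ring_nf
  have e1 : Real.sinh s ^ m = Real.exp ((m:ℝ)*s)/2^m * (1 - Real.exp (-2*s))^m := by
    rw [hsinh, mul_pow, div_pow, ← Real.exp_nat_mul]
  have hfac : (0:ℝ) ≤ Real.exp ((m:ℝ)*s)/2^m := by positivity
  have hmono : Real.exp ((m:ℝ)*s) * Real.exp (-2*s) ≤ Real.exp (((m:ℝ)-1)*R) := by
    rw [← Real.exp_add]
    apply Real.exp_le_exp.2
    nlinarith
  have p1 : Real.exp ((m:ℝ)*s)/2^m * (1 - (m:ℝ)*Real.exp (-2*s))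
      ≤ Real.exp ((m:ℝ)*s)/2^m * (1 - Real.exp (-2*s))^m :=
    mul_le_mul_of_nonneg_left hbern hfac
  have p2 : (m:ℝ)*(Real.exp ((m:ℝ)*s) * Real.exp (-2*s)) * ((2:ℝ)^m)⁻¹
      ≤ (m:ℝ)*Real.exp (((m:ℝ)-1)*R) * ((2:ℝ)^m)⁻¹ := by
    apply mul_le_mul_of_nonneg_right _ (by positivity)
    exact mul_le_mul_of_nonneg_left hmono (Nat.cast_nonneg m)
  rw [e1]
  rw [div_eq_mul_inv, div_eq_mul_inv] at *
  nlinarith [p1, p2]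

lemma sinh_int_ub (m : ℕ) (hm : 1 ≤ m) {R : ℝ} (hR : 0 ≤ R) :
    (m:ℝ) * 2^m * ∫ s in (0:ℝ)..R, Real.sinh s ^ m ≤ Real.exp ((m:ℝ)*R) - 1 := by
  have hm0 : ((m:ℝ)) ≠ 0 := by positivity
  have hint1 : IntervalIntegrable (fun s => Real.sinh s ^ m) volume 0 R :=
    (Real.continuous_sinh.pow m).intervalIntegrable _ _
  have hc2 : Continuous (fun s : ℝ => Real.exp ((m:ℝ)*s)/2^m) := by fun_prop
  have h := intervalIntegral.integral_mono_on hR hint1 (hc2.intervalIntegrable _ _)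
    (fun s hs => sinh_pow_ub m hs.1)
  rw [intervalIntegral.integral_div, int_exp_mul _ _ hm0] at h
  rw [div_div] at h
  have := (le_div_iff₀ (show (0:ℝ) < (m:ℝ)*2^m by positivity)).1 h
  linarith
lemma sinh_int_lb (m : ℕ) (hm : 1 ≤ m) {R : ℝ} (hR : 0 ≤ R) :
    Real.exp ((m:ℝ)*R) - 1 - (m:ℝ)^2 * Real.exp (((m:ℝ)-1)*R) * R
      ≤ (m:ℝ) * 2^m * ∫ s in (0:ℝ)..R, Real.sinh s ^ m := by
  have hm0 : ((m:ℝ)) ≠ 0 := by positivity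
  have hint1 : IntervalIntegrable (fun s => Real.sinh s ^ m) volume 0 R :=
    (Real.continuous_sinh.pow m).intervalIntegrable _ _
  have hc2 : Continuous (fun s : ℝ =>
      Real.exp ((m:ℝ)*s)/2^m - (m:ℝ)*Real.exp (((m:ℝ)-1)*R)/2^m) := by fun_prop
  have h := intervalIntegral.integral_mono_on hR (hc2.intervalIntegrable _ _) hint1
    (fun s hs => sinh_pow_lb m hm hs.1 hs.2)
  have hc3 : Continuous (fun s : ℝ => Real.exp ((m:ℝ)*s)/2^m) := by fun_prop
  rw [intervalIntegral.integral_sub (hc3.intervalIntegrable _ _)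
    (intervalIntegrable_const), intervalIntegral.integral_div, int_exp_mul _ _ hm0,
    intervalIntegral.integral_const, smul_eq_mul, div_div] at h
  have h2 := mul_le_mul_of_nonneg_left h (show (0:ℝ) ≤ (m:ℝ)*2^m by positivity)
  have hne : ((m:ℝ) * 2^m) ≠ 0 := by positivity
  rw [mul_sub, mul_div_cancel₀ _ hne] at h2
  calc Real.exp ((m:ℝ)*R) - 1 - (m:ℝ)^2 * Real.exp (((m:ℝ)-1)*R) * R
      = Real.exp ((m:ℝ)*R) - 1 - (m:ℝ)*2^m * ((R-0)*((m:ℝ)*Real.exp (((m:ℝ)-1)*R)/2^m)) := by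
        field_simp; ring
    _ ≤ (m:ℝ) * 2^m * ∫ s in (0:ℝ)..R, Real.sinh s ^ m := h2

lemma aux_exp_sq {R : ℝ} (hR : 0 < R) : Real.exp (-R) * R^2 ≤ 4 := by
  have hhalf : R/2 + 1 ≤ Real.exp (R/2) := Real.add_one_le_exp _
  have hsq : Real.exp R = Real.exp (R/2) * Real.exp (R/2) := by
    rw [← Real.exp_add]; congr 1; ring
  rw [Real.exp_neg, inv_mul_le_iff₀ (Real.exp_pos R)]
  nlinarith [hR]

lemma abs_mul_sub_one {A B : ℝ} (hA0 : 0 ≤ A) (hA1 : A ≤ 1) (hB : 1 ≤ B) :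
    |A*B - 1| ≤ (1 - A) + (B - 1) := by
  rw [abs_le]; constructor <;> nlinarith


lemma core_pointwise (n : ℕ) {A W a s t ε : ℝ} (hA0 : 0 ≤ A) (hA1 : A ≤ 1)
    (hε : 1 - A ≤ ε) (ht0 : 0 ≤ t) (hs0 : 0 ≤ s) (hW1 : 1 ≤ W) (ha : 0 < a)
    (hnt : (n:ℝ)*t ≤ s/2 + 1) (htub : t ≤ (1+s)*W/a) :
    |A*(1+t)^n - 1| * Real.exp (-s)
      ≤ (ε + 4*Real.exp 1*((n:ℝ)*W/a)) * Real.exp (-(s/4)) := by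
  set E : ℝ := Real.exp (-(s/4)) with hE_def
  have hE : 0 < E := Real.exp_pos _
  have hEle1 : E ≤ 1 := by rw [hE_def, Real.exp_le_one_iff]; linarith
  have hEs : Real.exp (-s) = E^4 := by
    rw [hE_def, ← Real.exp_nat_mul]; congr 1; push_cast; ring
  set B : ℝ := (1 + t)^n with hB_def
  have hB1 : 1 ≤ B := one_le_pow₀ (by linarith)
  have hBexp : B ≤ Real.exp ((n:ℝ)*t) := by
    rw [hB_def, Real.exp_nat_mul]
    exact pow_le_pow_left₀ (by linarith) (by linarith [Real.add_one_le_exp t]) n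
  have hBub : B - 1 ≤ (n:ℝ)*t*Real.exp ((n:ℝ)*t) := by
    have hx := Real.add_one_le_exp (-((n:ℝ)*t))
    have hprod : Real.exp ((n:ℝ)*t) * Real.exp (-((n:ℝ)*t)) = 1 := by
      rw [← Real.exp_add]; simp
    nlinarith [Real.exp_pos ((n:ℝ)*t), hBexp]
  have hY : Real.exp (s/2) * E^2 = 1 := by
    rw [hE_def, ← Real.exp_nat_mul, ← Real.exp_add]
    rw [show s/2 + ((2:ℕ):ℝ)*(-(s/4)) = 0 from by push_cast; ring]
    exact Real.exp_zero
  have h1sE : (1+s)*E ≤ 4 := by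
    have hEE4 : Real.exp (s/4) * E = 1 := by
      rw [hE_def, ← Real.exp_add, show s/4 + -(s/4) = 0 from by ring]
      exact Real.exp_zero
    nlinarith [Real.add_one_le_exp (s/4), hE.le,
      mul_le_mul_of_nonneg_right (Real.add_one_le_exp (s/4)) hE.le]
  have hXexp : Real.exp ((n:ℝ)*t) ≤ Real.exp 1 * Real.exp (s/2) := by
    rw [← Real.exp_add]; exact Real.exp_le_exp.2 (by linarith)
  have hE4le : E^4 ≤ E := by simpa using pow_le_pow_of_le_one hE.le hEle1 (by norm_num : 1 ≤ 4)
  have hεnn : 0 ≤ ε := by linarith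
  have key1 : E^4 * (1 - A) ≤ ε * E := by
    have k1 : E^4 * (1 - A) ≤ E * (1 - A) :=
      mul_le_mul_of_nonneg_right hE4le (by linarith)
    have k2 : E * (1 - A) ≤ E * ε := mul_le_mul_of_nonneg_left hε hE.le
    linarith
  have hntnn : (0:ℝ) ≤ (n:ℝ)*t := by positivity
  have key2 : E^4 * (B - 1) ≤ 4*Real.exp 1*((n:ℝ)*W/a) * E := by
    calc E^4 * (B - 1) ≤ E^4 * ((n:ℝ)*t*Real.exp ((n:ℝ)*t)) :=
          mul_le_mul_of_nonneg_left hBub (by positivity)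
      _ ≤ E^4 * ((n:ℝ)*t*(Real.exp 1 * Real.exp (s/2))) :=
          mul_le_mul_of_nonneg_left
            (mul_le_mul_of_nonneg_left hXexp hntnn) (by positivity)
      _ = (n:ℝ)*t*Real.exp 1*(Real.exp (s/2)*E^2)*E^2 := by ring
      _ = (n:ℝ)*t*Real.exp 1*E^2 := by rw [hY]; ring
      _ ≤ (n:ℝ)*((1+s)*W/a)*Real.exp 1*E^2 := by
          have h := mul_le_mul_of_nonneg_right
            (mul_le_mul_of_nonneg_left htub (Nat.cast_nonneg n : (0:ℝ) ≤ (n:ℝ)))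
            (mul_nonneg (Real.exp_pos 1).le (sq_nonneg E))
          linarith [h]
      _ = ((n:ℝ)*W/a)*Real.exp 1*((1+s)*E)*E := by ring
      _ ≤ ((n:ℝ)*W/a)*Real.exp 1*4*E := by
          have hq : (0:ℝ) ≤ ((n:ℝ)*W/a)*Real.exp 1*E :=
            mul_nonneg (mul_nonneg (by positivity) (Real.exp_pos 1).le) hE.le
          have h := mul_le_mul_of_nonneg_left h1sE
            (mul_nonneg (show (0:ℝ) ≤ (n:ℝ)*W/a by positivity) (Real.exp_pos 1).le)
          nlinarith [h, hE.le]
      _ = 4*Real.exp 1*((n:ℝ)*W/a) * E := by ring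
  calc |A*B - 1| * Real.exp (-s) ≤ ((1-A)+(B-1)) * E^4 := by
        rw [hEs]
        exact mul_le_mul_of_nonneg_right (abs_mul_sub_one hA0 hA1 hB1)
          (by positivity)
    _ = E^4*(1-A) + E^4*(B-1) := by ring
    _ ≤ ε * E + 4*Real.exp 1*((n:ℝ)*W/a) * E := by linarith [key1, key2]
    _ = (ε + 4*Real.exp 1*((n:ℝ)*W/a)) * E := by ring

/-- Surface area of the (d-1)-dimensional Euclidean unit sphere. -/
noncomputable def omegaSphere (d : ℕ) : ℝ :=
  2 * Real.pi ^ ((d : ℝ) / 2) / Real.Gamma ((d : ℝ) / 2)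

/-- Volume of a hyperbolic ball of radius `R` in `d`-dimensional hyperbolic space. -/
noncomputable def hypBallVol (d : ℕ) (R : ℝ) : ℝ :=
  omegaSphere d * ∫ s in (0:ℝ)..R, Real.sinh s ^ (d - 1)

/-- The threshold `v_k(R)`. -/
noncomputable def vThreshold (d k : ℕ) (R : ℝ) : ℝ :=
  R * ((d : ℝ) - 1) + ((k : ℝ) - 1) * Real.log (R * ((d : ℝ) - 1)) -
    Real.log (((k - 1).factorial : ℝ) * 2 ^ (d - 1) * ((d : ℝ) - 1) / omegaSphere d)

/-- The Lebesgue density of the intensity measure of the exceedance point process. -/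
noncomputable def rhoDensity (d k : ℕ) (R u : ℝ) : ℝ :=
  Real.exp (-u) * hypBallVol d R *
    (2 ^ (d - 1) * ((d : ℝ) - 1) * Real.exp (-R * ((d : ℝ) - 1)) / omegaSphere d) *
    ((u + vThreshold d k R) / (R * ((d : ℝ) - 1))) ^ (k - 1)

theorem stmt_15 (d k : ℕ) (hd : 2 ≤ d) (hk : 2 ≤ k) (c : ℝ) :
    ∃ C R₀ : ℝ, 0 < C ∧ 0 < R₀ ∧ ∀ R : ℝ, R₀ ≤ R →
      (∫ u in Set.Ioi c, |rhoDensity d k R u - Real.exp (-u)|) ≤ C * Real.log R / R := by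
  obtain ⟨m, hm_def⟩ : ∃ x : ℕ, x = d - 1 := ⟨_, rfl⟩
  obtain ⟨n, hn_def⟩ : ∃ x : ℕ, x = k - 1 := ⟨_, rfl⟩
  have hm1 : 1 ≤ m := by omega
  have hn1 : 1 ≤ n := by omega
  have hmr : ((d:ℝ) - 1) = (m:ℝ) := by
    rw [hm_def, Nat.cast_sub (by omega : 1 ≤ d), Nat.cast_one]
  have hnr : ((k:ℝ) - 1) = (n:ℝ) := by
    rw [hn_def, Nat.cast_sub (by omega : 1 ≤ k), Nat.cast_one]
  have hm1r : (1:ℝ) ≤ (m:ℝ) := by exact_mod_cast hm1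
  have hn1r : (1:ℝ) ≤ (n:ℝ) := by exact_mod_cast hn1
  have hω : 0 < omegaSphere d := by
    unfold omegaSphere
    have hg : 0 < Real.Gamma ((d:ℝ)/2) := Real.Gamma_pos_of_pos (by positivity)
    positivity
  obtain ⟨L, hL_def⟩ : ∃ x : ℝ, x = Real.log ((n.factorial : ℝ) * 2 ^ m * (m:ℝ) / omegaSphere d) := ⟨_, rfl⟩
  obtain ⟨P, hP_def⟩ : ∃ x : ℝ, x = 1 + c - L + (n:ℝ) * Real.log (m:ℝ) := ⟨_, rfl⟩
  obtain ⟨K, hK_def⟩ : ∃ x : ℝ, x = 4*(1+(m:ℝ)^2) + 4*Real.exp 1*(n:ℝ)*(|P|+(n:ℝ))/(m:ℝ) := ⟨_, rfl⟩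
  obtain ⟨J, hJ_def⟩ : ∃ x : ℝ, x = ∫ u in Set.Ioi c, Real.exp (-((u - c)/4)) := ⟨_, rfl⟩
  have hJ0 : 0 ≤ J := by rw [hJ_def]; exact integral_nonneg (fun u => (Real.exp_pos _).le)
  have hJint : IntegrableOn (fun u : ℝ => Real.exp (-((u - c)/4))) (Set.Ioi c) := by
    have heq : (fun u : ℝ => Real.exp (-((u - c)/4)))
        = fun u : ℝ => Real.exp (c/4) * Real.exp (-4⁻¹*u) := by
      funext u; rw [← Real.exp_add]; congr 1; ring
    have h1 : IntegrableOn (fun x : ℝ => Real.exp (-4⁻¹*x)) (Set.Ioi c) :=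
      exp_neg_integrableOn_Ioi c (by norm_num)
    rw [heq]
    exact h1.const_mul _
  have hK0 : 0 < K := by rw [hK_def]; positivity
  refine ⟨K * Real.exp (-c) * (J + 1),
    Real.exp (1 + |P|) + 4*((n:ℝ)*(|P|+(n:ℝ)))^2 + 2*(n:ℝ) + 3,
    mul_pos (mul_pos hK0 (Real.exp_pos _)) (by linarith), by positivity, ?_⟩
  intro R hR
  have hP2 : (0:ℝ) ≤ 4*((n:ℝ)*(|P|+(n:ℝ)))^2 := by positivity
  have hexpP : (0:ℝ) < Real.exp (1 + |P|) := Real.exp_pos _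
  have hn0 : (0:ℝ) ≤ 2*(n:ℝ) := by positivity
  have hR3 : 3 ≤ R := by linarith
  have hRpos : 0 < R := by linarith
  have hR1 : 1 ≤ R := by linarith
  obtain ⟨a, ha_def⟩ : ∃ x : ℝ, x = R * (m:ℝ) := ⟨_, rfl⟩
  have ha : 0 < a := by rw [ha_def]; positivity
  have hRa : R ≤ a := by
    have := mul_le_mul_of_nonneg_left hm1r hRpos.le
    rw [ha_def]; linarith
  have hlogR1 : 1 ≤ Real.log R := by
    rw [Real.le_log_iff_exp_le hRpos]
    calc Real.exp 1 ≤ 2.7182818286 := (Real.exp_one_lt_d9).le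
      _ ≤ 3 := by norm_num
      _ ≤ R := hR3
  have hlogR0 : 0 ≤ Real.log R := by linarith
  have hlogRP : 1 + |P| ≤ Real.log R := by
    rw [Real.le_log_iff_exp_le hRpos]; linarith
  obtain ⟨w, hw_def⟩ : ∃ x : ℝ, x = (n:ℝ) * Real.log a - L := ⟨_, rfl⟩
  obtain ⟨W, hW_def⟩ : ∃ x : ℝ, x = 1 + c + w := ⟨_, rfl⟩
  have hWP : W = P + (n:ℝ) * Real.log R := by
    rw [hW_def, hw_def, ha_def, Real.log_mul (ne_of_gt hRpos) (by positivity), hP_def]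
    ring
  have hW1 : 1 ≤ W := by
    rw [hWP]
    have h := mul_le_mul_of_nonneg_left hlogRP (by positivity : (0:ℝ) ≤ (n:ℝ))
    have h2 : (1:ℝ)*(1+|P|) ≤ (n:ℝ)*(1+|P|) :=
      mul_le_mul_of_nonneg_right hn1r (by positivity)
    linarith [neg_abs_le P]
  have hWle : W ≤ (|P| + (n:ℝ)) * Real.log R := by
    rw [hWP]
    have h := mul_le_mul_of_nonneg_left hlogR1 (abs_nonneg P)
    linarith [le_abs_self P]
  have hnW : (n:ℝ) * W ≤ a := by
    obtain ⟨q, hq_def⟩ : ∃ x : ℝ, x = (n:ℝ)*(|P|+(n:ℝ)) := ⟨_, rfl⟩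
    have hq0 : 0 ≤ q := by rw [hq_def]; positivity
    have hsq : 2*q ≤ Real.sqrt R := by
      rw [show (2*q) = Real.sqrt ((2*q)^2) from (Real.sqrt_sq (by rw [hq_def]; positivity)).symm]
      apply Real.sqrt_le_sqrt
      rw [hq_def]
      linarith [hexpP.le]
    have hlogsqrt : Real.log R ≤ 2 * Real.sqrt R := by
      have h1 : Real.log (Real.sqrt R) ≤ Real.sqrt R - 1 :=
        Real.log_le_sub_one_of_pos (Real.sqrt_pos.2 hRpos)
      rw [Real.log_sqrt hRpos.le] at h1
      linarith
    have hsR : Real.sqrt R * Real.sqrt R = R := Real.mul_self_sqrt hRpos.le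
    have h2 := mul_le_mul_of_nonneg_left hWle (by positivity : (0:ℝ) ≤ (n:ℝ))
    have h3 := mul_le_mul_of_nonneg_left hlogsqrt hq0
    have h4 := mul_le_mul_of_nonneg_right hsq (Real.sqrt_nonneg R)
    have h5 : (n:ℝ)*((|P|+(n:ℝ))*Real.log R) = q * Real.log R := by rw [hq_def]; ring
    linarith [h2, h3, h4, h5, hsR, hRa]
  have h2n : 2*(n:ℝ) ≤ a := by linarith
  -- A bounds
  obtain ⟨I, hI_def⟩ : ∃ x : ℝ, x = ∫ s in (0:ℝ)..R, Real.sinh s ^ m := ⟨_, rfl⟩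
  obtain ⟨A, hA_def⟩ : ∃ x : ℝ, x = 2 ^ m * (m:ℝ) * Real.exp (-R * (m:ℝ)) * I := ⟨_, rfl⟩
  have hI0 : 0 ≤ I := by
    rw [hI_def]
    apply intervalIntegral.integral_nonneg hRpos.le
    intro s hs
    exact pow_nonneg (Real.sinh_nonneg_iff.2 hs.1) m
  have hX := Real.exp_pos (-R * (m:ℝ))
  have hEE : Real.exp (-R * (m:ℝ)) * Real.exp ((m:ℝ)*R) = 1 := by
    rw [← Real.exp_add, show -R * (m:ℝ) + (m:ℝ)*R = 0 from by ring, Real.exp_zero]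
  have hEE2 : Real.exp (-R * (m:ℝ)) * Real.exp (((m:ℝ)-1)*R) = Real.exp (-R) := by
    rw [← Real.exp_add]; congr 1; ring
  have hA0 : 0 ≤ A := by rw [hA_def]; positivity
  have hub := sinh_int_ub m hm1 hRpos.le
  have hlb := sinh_int_lb m hm1 hRpos.le
  rw [← hI_def] at hub hlb
  have hA1 : A ≤ 1 := by
    have h5 := mul_le_mul_of_nonneg_left hub hX.le
    have h6 : Real.exp (-R*(m:ℝ)) * (Real.exp ((m:ℝ)*R) - 1)
        = 1 - Real.exp (-R*(m:ℝ)) := by rw [mul_sub, hEE, mul_one]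
    rw [hA_def]
    linarith [hX.le]
  have h4exp := aux_exp_sq hRpos
  have hXle : Real.exp (-R * (m:ℝ)) ≤ Real.exp (-R) := by
    apply Real.exp_le_exp.2
    have := mul_le_mul_of_nonneg_left hm1r hRpos.le
    linarith
  have hstep : 1 - A ≤ Real.exp (-R * (m:ℝ)) + (m:ℝ)^2 * Real.exp (-R) * R := by
    have h7 := mul_le_mul_of_nonneg_left hlb hX.le
    have h8 : Real.exp (-R*(m:ℝ)) *
        (Real.exp ((m:ℝ)*R) - 1 - (m:ℝ)^2 * Real.exp (((m:ℝ)-1)*R) * R)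
        = 1 - Real.exp (-R*(m:ℝ)) - (m:ℝ)^2*Real.exp (-R)*R := by
      linear_combination hEE - (m:ℝ)^2*R*hEE2
    rw [hA_def]
    linarith [h7, h8]
  have hεR : 1 - A ≤ 4*(1+(m:ℝ)^2)/R := by
    rw [le_div_iff₀ hRpos]
    have e0 := mul_le_mul_of_nonneg_right hstep hRpos.le
    have e1 : Real.exp (-R * (m:ℝ)) * R ≤ Real.exp (-R) * R :=
      mul_le_mul_of_nonneg_right hXle hRpos.le
    have hRR : R ≤ R^2 := by
      have := mul_nonneg hRpos.le (show (0:ℝ) ≤ R - 1 by linarith)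
      linarith [this]
    have e2 : Real.exp (-R) * R ≤ Real.exp (-R) * R^2 :=
      mul_le_mul_of_nonneg_left hRR (Real.exp_pos (-R)).le
    have h9 := mul_le_mul_of_nonneg_left h4exp (sq_nonneg (m:ℝ))
    linarith [e0, e1, e2, h9]
  -- bracket bound
  have hbr : 4*(1+(m:ℝ)^2)/R + 4*Real.exp 1*((n:ℝ)*W/a) ≤ K * (Real.log R / R) := by
    have hm0 : (0:ℝ) < (m:ℝ) := by positivity
    have h1 : 4*(1+(m:ℝ)^2)/R ≤ 4*(1+(m:ℝ)^2) * (Real.log R / R) := by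
      rw [mul_div_assoc']
      refine (div_le_div_iff_of_pos_right hRpos).2 ?_
      have := mul_le_mul_of_nonneg_left hlogR1
        (show (0:ℝ) ≤ 4*(1+(m:ℝ)^2) by positivity)
      linarith
    have h2 : 4*Real.exp 1*((n:ℝ)*W/a)
        ≤ 4*Real.exp 1*(n:ℝ)*(|P|+(n:ℝ))/(m:ℝ) * (Real.log R / R) := by
      rw [ha_def, div_mul_div_comm, ← mul_div_assoc]
      rw [div_le_div_iff₀ (by positivity) (by positivity)]
      have hcoef : (0:ℝ) ≤ 4*Real.exp 1*(n:ℝ)*((m:ℝ)*R) := by positivity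
      linarith [mul_le_mul_of_nonneg_left hWle hcoef]
    have hKr : K * (Real.log R / R) = 4*(1+(m:ℝ)^2) * (Real.log R / R)
        + 4*Real.exp 1*(n:ℝ)*(|P|+(n:ℝ))/(m:ℝ) * (Real.log R / R) := by
      rw [hK_def]; ring
    rw [hKr]
    linarith [h1, h2]
  have hexpc := Real.exp_pos (-c)
  -- pointwise bound
  have hpt : ∀ u ∈ Set.Ioi c, |rhoDensity d k R u - Real.exp (-u)|
      ≤ Real.exp (-c) * (K * (Real.log R / R)) * Real.exp (-((u - c)/4)) := by
    intro u hu
    have hu' : c < u := hu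
    have hs0 : 0 ≤ u - c := by linarith
    obtain ⟨t, ht_def⟩ : ∃ x : ℝ, x = (u + w)/a := ⟨_, rfl⟩
    have huw : u + w = (u - c) + (W - 1) := by rw [hW_def]; ring
    have ht0 : 0 ≤ t := by
      rw [ht_def]; apply div_nonneg _ ha.le; rw [huw]; linarith
    have hta : t * a = u + w := by rw [ht_def]; exact div_mul_cancel₀ _ ha.ne'
    have hrho : rhoDensity d k R u = Real.exp (-u) * A * (1 + t)^n := by
      have hvT : vThreshold d k R = a + w := by
        rw [vThreshold, hmr, hnr, ← hm_def, ← hn_def, hw_def, hL_def, ha_def]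
        ring
      have hpow : ((u + vThreshold d k R) / (R * ((d:ℝ) - 1))) ^ (k - 1)
          = (1 + t)^n := by
        rw [hvT, hmr, ← hn_def, ht_def, ← ha_def]
        congr 1
        field_simp
        ring
      rw [rhoDensity, hpow, hypBallVol, hmr, ← hm_def, ← hI_def, hA_def]
      field_simp [hω.ne']
    have hnt : (n:ℝ)*t ≤ (u - c)/2 + 1 := by
      have hprod : 0 ≤ (a - 2*(n:ℝ)) * (u - c) :=
        mul_nonneg (by linarith) hs0
      have hkey : ((n:ℝ)*t)*a ≤ ((u - c)/2 + 1)*a := by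
        have : (n:ℝ)*(t*a) ≤ ((u - c)/2 + 1)*a := by
          rw [hta, huw]; linarith [hprod, hnW, hn1r]
        linarith [this]
      exact le_of_mul_le_mul_right hkey ha
    have htub : t ≤ (1+(u - c))*W/a := by
      have hprod2 : 0 ≤ (u - c) * (W - 1) :=
        mul_nonneg hs0 (by linarith)
      have hub' : u + w ≤ (1+(u - c))*W := by linarith [hprod2, huw]
      rw [ht_def]
      gcongr
    have hcore := core_pointwise n hA0 hA1 hεR ht0 hs0 hW1 ha hnt htub
    have hexpu : Real.exp (-u) = Real.exp (-c) * Real.exp (-(u - c)) := by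
      rw [← Real.exp_add]; congr 1; ring
    calc |rhoDensity d k R u - Real.exp (-u)|
        = |A*(1+t)^n - 1| * Real.exp (-(u - c)) * Real.exp (-c) := by
          rw [hrho, hexpu,
            show Real.exp (-c) * Real.exp (-(u-c)) * A * (1+t)^n
              - Real.exp (-c) * Real.exp (-(u-c))
              = (A*(1+t)^n - 1) * (Real.exp (-(u-c)) * Real.exp (-c)) from by ring,
            abs_mul, abs_of_pos (by positivity : (0:ℝ) <
              Real.exp (-(u-c)) * Real.exp (-c))]
          ring
      _ ≤ ((4*(1+(m:ℝ)^2)/R + 4*Real.exp 1*((n:ℝ)*W/a)) * Real.exp (-((u-c)/4)))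
            * Real.exp (-c) := by
          apply mul_le_mul_of_nonneg_right _ hexpc.le
          exact hcore
      _ ≤ (K * (Real.log R / R) * Real.exp (-((u-c)/4))) * Real.exp (-c) := by
          apply mul_le_mul_of_nonneg_right _ hexpc.le
          exact mul_le_mul_of_nonneg_right hbr (Real.exp_pos _).le
      _ = Real.exp (-c) * (K * (Real.log R / R)) * Real.exp (-((u - c)/4)) := by
          ring
  -- integrate
  have hgint : Integrable (fun u : ℝ =>
      Real.exp (-c) * (K * (Real.log R / R)) * Real.exp (-((u - c)/4)))
      (volume.restrict (Set.Ioi c)) := hJint.const_mul _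
  have hmono : (∫ u in Set.Ioi c, |rhoDensity d k R u - Real.exp (-u)|)
      ≤ ∫ u in Set.Ioi c,
        Real.exp (-c) * (K * (Real.log R / R)) * Real.exp (-((u - c)/4)) := by
    apply integral_mono_of_nonneg
    · exact Filter.Eventually.of_forall (fun u => abs_nonneg _)
    · exact hgint
    · rw [Filter.EventuallyLE, ae_restrict_iff' measurableSet_Ioi]
      exact Filter.Eventually.of_forall hpt
  have hcalc : (∫ u in Set.Ioi c,
      Real.exp (-c) * (K * (Real.log R / R)) * Real.exp (-((u - c)/4)))
      = Real.exp (-c) * (K * (Real.log R / R)) * J := by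
    rw [hJ_def, ← MeasureTheory.integral_const_mul]
  have hq : 0 ≤ Real.log R / R := div_nonneg hlogR0 hRpos.le
  have hfin : Real.exp (-c) * (K * (Real.log R / R)) * J
      ≤ K * Real.exp (-c) * (J + 1) * Real.log R / R := by
    rw [mul_div_assoc]
    linarith [mul_nonneg (mul_nonneg hK0.le hexpc.le) hq]
  calc (∫ u in Set.Ioi c, |rhoDensity d k R u - Real.exp (-u)|)
      ≤ Real.exp (-c) * (K * (Real.log R / R)) * J := by
        rw [← hcalc]; exact hmono
    _ ≤ K * Real.exp (-c) * (J + 1) * Real.log R / R := hfin
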